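/- Let W be an n×n matrix with entries in ℝ ∪ {-∞}, and let δ_W(x)_i = max_j (w_ij + x_j) for x in the hypercube [a,b]^n (with 0 ≤ a < b). Then δ_W maps [a,b]^n into [a,b]^n if and only if W is row-0-astic, i.e., for every row i, max_j w_ij = 0. -/

import Mathlib

/-- Max-plus product of a matrix with a real vector: `(W ⊗ x)_i = ⨆ j, w_ij + x_j`. -/
noncomputable def deltaE {n : ℕ} (W : Fin n → Fin n → EReal) (x : Fin n → ℝ) (i : Fin n) : EReal :=
  ⨆ j, W i j + (x j : EReal)

/-- Min-plus adjoint candidate: `ε_W(y)_i = ⨅ j, y_j - w_ji`. -/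
noncomputable def epsE {n : ℕ} (W : Fin n → Fin n → EReal) (y : Fin n → ℝ) (i : Fin n) : EReal :=
  ⨅ j, (y j : EReal) - W j i

/-- Row-0-astic: every row supremum equals 0. -/
def RowAstic {n : ℕ} (W : Fin n → Fin n → EReal) : Prop := ∀ i, (⨆ j, W i j) = 0

/-- Column-0-astic: every column supremum equals 0. -/
def ColAstic {n : ℕ} (W : Fin n → Fin n → EReal) : Prop := ∀ j, (⨆ i, W i j) = 0

/-- Doubly-0-astic. -/
def DoublyAstic {n : ℕ} (W : Fin n → Fin n → EReal) : Prop := RowAstic W ∧ ColAstic W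

/-- `δ_W` maps `[a,b]^n` into itself iff `W` is row-0-astic. -/
theorem stmt0 (n : ℕ) (hn : 0 < n) (a b : ℝ) (ha : 0 ≤ a) (hab : a < b)
    (W : Fin n → Fin n → EReal) :
    (∀ x : Fin n → ℝ, (∀ i, x i ∈ Set.Icc a b) →
        ∀ i, deltaE W x i ∈ Set.Icc (a : EReal) (b : EReal)) ↔ RowAstic W := by
  constructor
  · intro h i
    have hb := h (fun _ => b) (fun _ => ⟨hab.le, le_refl b⟩) i
    have ha' := h (fun _ => a) (fun _ => ⟨le_refl a, hab.le⟩) i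
    simp only [deltaE] at hb ha'
    have hub : (⨆ j, W i j) ≤ 0 := by
      apply iSup_le
      intro j
      have h0 : W i j + (b : EReal) ≤ (b : EReal) := le_trans (le_iSup (fun j => W i j + (b : EReal)) j) hb.2
      exact (EReal.addLECancellable_coe b).add_le_add_iff_right.mp
        (by simpa using h0 : W i j + (b : EReal) ≤ 0 + (b : EReal))
    have hlb : (0 : EReal) ≤ ⨆ j, W i j := by
      have h1 : (a : EReal) ≤ ⨆ j, W i j + (a : EReal) := ha'.1
      have h2 : (⨆ j, W i j + (a : EReal)) ≤ (⨆ j, W i j) + (a : EReal) :=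
        iSup_le fun j => add_le_add_left (le_iSup _ j) _
      have h3 : (0 : EReal) + (a : EReal) ≤ (⨆ j, W i j) + (a : EReal) := by
        simpa using le_trans h1 h2
      exact (EReal.addLECancellable_coe a).add_le_add_iff_right.mp h3
    exact le_antisymm hub hlb
  · intro h x hx i
    simp only [deltaE]
    constructor
    · have h1 : (⨆ j, W i j) + (a : EReal) ≤ ⨆ j, W i j + (a : EReal) := by
        rcases Finset.exists_max_image Finset.univ (fun j => W i j)
          ⟨⟨0, hn⟩, Finset.mem_univ _⟩ with ⟨j0, _, hj0⟩
        have he : (⨆ j, W i j) = W i j0 :=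
          le_antisymm (iSup_le fun j => hj0 j (Finset.mem_univ j)) (le_iSup _ j0)
        rw [he]
        exact le_iSup (fun j => W i j + (a : EReal)) j0
      have h2 : (⨆ j, W i j + (a : EReal)) ≤ ⨆ j, W i j + (x j : EReal) :=
        iSup_le fun j => le_iSup_of_le j (add_le_add_right (by exact_mod_cast (hx j).1) _)
      calc (a : EReal) = (⨆ j, W i j) + (a : EReal) := by rw [h i]; simp
        _ ≤ _ := le_trans h1 h2
    · apply iSup_le
      intro j
      calc W i j + (x j : EReal) ≤ 0 + (b : EReal) :=
            add_le_add (le_trans (le_iSup _ j) (h i).le) (by exact_mod_cast (hx j).2)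
        _ = (b : EReal) := by simp
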